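/- For every integer N ≥ 1, every real number p ≥ 2, and all vectors x, y ∈ ℝ^N, the Simon-type inequality ⟨|x|^{p−2} x − |y|^{p−2} y, x − y⟩ ≥ 4^{1−p} |x − y|^p holds, where ⟨·,·⟩ is the Euclidean inner product, |·| is the Euclidean norm, and |z|^{p−2} z is interpreted as 0 when z = 0. -/

import Mathlib

open Real

/-- Simon-type inequality: for `p ≥ 2` and all `x, y ∈ ℝ^N`,
`⟨|x|^{p-2} x - |y|^{p-2} y, x - y⟩ ≥ 4^{1-p} |x - y|^p`. -/
theorem simon_inequality (N : ℕ) (hN : 1 ≤ N) (p : ℝ) (hp : 2 ≤ p)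
    (x y : EuclideanSpace ℝ (Fin N)) :
    (4 : ℝ) ^ (1 - p) * ‖x - y‖ ^ p ≤
      (inner ℝ (‖x‖ ^ (p - 2) • x - ‖y‖ ^ (p - 2) • y) (x - y) : ℝ) := by
  set a := ‖x‖ with ha
  set b := ‖y‖ with hb
  set d := ‖x - y‖ with hd
  have ha0 : 0 ≤ a := norm_nonneg x
  have hb0 : 0 ≤ b := norm_nonneg y
  have hd0 : 0 ≤ d := norm_nonneg _
  set s := a ^ (p - 2) with hs
  set t := b ^ (p - 2) with ht
  have hs0 : 0 ≤ s := rpow_nonneg ha0 _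
  have ht0 : 0 ≤ t := rpow_nonneg hb0 _
  have hexp : (inner ℝ (s • x - t • y) (x - y) : ℝ)
      = s * a ^ 2 + t * b ^ 2 - (s + t) * (inner ℝ x y : ℝ) := by
    simp only [inner_sub_left, inner_sub_right, real_inner_smul_left,
      real_inner_self_eq_norm_sq, real_inner_comm y x]
    ring
  have hdsq : d ^ 2 = a ^ 2 - 2 * (inner ℝ x y : ℝ) + b ^ 2 := by
    rw [hd, ha, hb]; exact norm_sub_sq_real x y
  have hmono : 0 ≤ (s - t) * (a ^ 2 - b ^ 2) := by
    rcases le_total a b with h | h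
    · have h1 : s ≤ t := rpow_le_rpow ha0 h (by linarith)
      have h2 : a ^ 2 ≤ b ^ 2 := by nlinarith
      nlinarith [mul_nonneg (sub_nonneg.2 h1) (sub_nonneg.2 h2)]
    · have h1 : t ≤ s := rpow_le_rpow hb0 h (by linarith)
      have h2 : b ^ 2 ≤ a ^ 2 := by nlinarith
      nlinarith [mul_nonneg (sub_nonneg.2 h1) (sub_nonneg.2 h2)]
  have key : (1/2) * (s + t) * d ^ 2 ≤ (inner ℝ (s • x - t • y) (x - y) : ℝ) := by
    rw [hexp, hdsq]; nlinarith
  have hmain : (4 : ℝ) ^ (1 - p) * d ^ p ≤ (1/2) * (s + t) * d ^ 2 := by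
    rcases eq_or_lt_of_le hd0 with h0 | h0
    · rw [← h0, Real.zero_rpow (by positivity : p ≠ 0)]
      simp
    · have hdp : d ^ p = d ^ (p - 2) * d ^ 2 := by
        rw [← Real.rpow_natCast d 2, ← Real.rpow_add h0]
        norm_num
      have h1 : d ^ (p - 2) ≤ (2:ℝ) ^ (p - 2) * (s + t) := by
        have hdab : d ≤ a + b := norm_sub_le x y
        have h2 : d ^ (p - 2) ≤ (a + b) ^ (p - 2) :=
          rpow_le_rpow hd0 hdab (by linarith)
        have h3 : (a + b) ^ (p - 2) ≤ (2 * max a b) ^ (p - 2) := by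
          apply rpow_le_rpow (by positivity) _ (by linarith)
          rcases le_total a b with h | h
          · rw [max_eq_right h]; linarith
          · rw [max_eq_left h]; linarith
        have h4 : (2 * max a b) ^ (p - 2) = 2 ^ (p - 2) * (max a b) ^ (p - 2) :=
          mul_rpow (by norm_num) (le_max_of_le_left ha0)
        have h5 : (max a b) ^ (p - 2) ≤ s + t := by
          rcases le_total a b with h | h
          · rw [max_eq_right h]; linarith
          · rw [max_eq_left h]; linarith
        calc d ^ (p - 2) ≤ (2 * max a b) ^ (p - 2) := h2.trans h3
          _ = 2 ^ (p-2) * (max a b) ^ (p-2) := h4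
          _ ≤ 2 ^ (p-2) * (s + t) :=
              mul_le_mul_of_nonneg_left h5 (rpow_nonneg (by norm_num) _)
      have hconst : (4:ℝ) ^ (1 - p) * 2 ^ (p - 2) ≤ 1/2 := by
        have e1 : (4:ℝ) ^ (1 - p) = (2:ℝ) ^ (2 * (1 - p)) := by
          rw [Real.rpow_mul (by norm_num : (0:ℝ) ≤ 2)]
          norm_num
        have e2 : (2:ℝ) ^ (2 * (1 - p)) * 2 ^ (p - 2) = (2:ℝ) ^ (-p) := by
          rw [← Real.rpow_add (by norm_num : (0:ℝ) < 2)]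
          ring_nf
        have e3 : (2:ℝ) ^ (-p) ≤ (2:ℝ) ^ (-2 : ℝ) :=
          rpow_le_rpow_of_exponent_le (by norm_num) (by linarith)
        have e4 : (2:ℝ) ^ (-2 : ℝ) = 1/4 := by
          rw [Real.rpow_neg (by norm_num : (0:ℝ) ≤ 2)]
          norm_num
        rw [e1, e2]
        rw [e4] at e3
        linarith
      have h2nn : (0:ℝ) ≤ (4:ℝ) ^ (1 - p) := rpow_nonneg (by norm_num) _
      have hd2 : (0:ℝ) ≤ d ^ 2 := by positivity
      calc (4:ℝ) ^ (1 - p) * d ^ p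
          = (4:ℝ) ^ (1 - p) * d ^ (p - 2) * d ^ 2 := by rw [hdp]; ring
        _ ≤ (4:ℝ) ^ (1 - p) * ((2:ℝ) ^ (p - 2) * (s + t)) * d ^ 2 := by
            apply mul_le_mul_of_nonneg_right _ hd2
            exact mul_le_mul_of_nonneg_left h1 h2nn
        _ = ((4:ℝ) ^ (1 - p) * 2 ^ (p - 2)) * (s + t) * d ^ 2 := by ring
        _ ≤ (1/2) * (s + t) * d ^ 2 := by
            apply mul_le_mul_of_nonneg_right _ hd2
            exact mul_le_mul_of_nonneg_right hconst (by linarith)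
  linarith
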